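/- Let 𝒯 be a hereditary torsion class of left R-modules with torsion radical t, and let M be an R-module. Construct inductively: M⁰ = M, Fⁿ = Mⁿ/t(Mⁿ), Iⁿ = injective hull of Fⁿ, and Mⁿ⁺¹ = Iⁿ/Fⁿ, with differential d: Iⁿ → Iⁿ⁺¹ the composite Iⁿ → Mⁿ⁺¹ → Fⁿ⁺¹ → Iⁿ⁺¹. Then d² = 0, so I⁰ → I¹ → I² → ⋯ is a cochain complex, and the cohomology of the augmented complex M → I⁰ → I¹ → ⋯ in degree n is isomorphic to t(Mⁿ). -/

import Mathlib

universe u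
structure HereditaryTorsionClass (R : Type u) [Ring R] where
  tor : ModuleCat.{u} R → Prop
  closed_submodule : ∀ (M N : ModuleCat.{u} R) (f : N →ₗ[R] M),
    Function.Injective f → tor M → tor N
  closed_quotient : ∀ (M N : ModuleCat.{u} R) (f : M →ₗ[R] N),
    Function.Surjective f → tor M → tor N
  closed_directSum : ∀ (ι : Type u) (M : ι → ModuleCat.{u} R),
    (∀ i, tor (M i)) → tor (ModuleCat.of R (DirectSum ι fun i => M i))
  closed_extension : ∀ (M : ModuleCat.{u} R) (N : Submodule R M),
    tor (ModuleCat.of R N) → tor (ModuleCat.of R (M ⧸ N)) → tor M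


lemma coh_aux {R : Type u} [Ring R] {I M : Type u} [AddCommGroup I] [Module R I]
    [AddCommGroup M] [Module R M] (p : I →ₗ[R] M) (hp : Function.Surjective p)
    (T : Submodule R M) :
    Nonempty ((Submodule.comap p T ⧸
        Submodule.comap (Submodule.comap p T).subtype (LinearMap.ker p)) ≃ₗ[R] T) := by
  set K := Submodule.comap p T
  have hmem : ∀ x : K, p x.1 ∈ T := fun x => x.2
  let f : K →ₗ[R] T := (p.domRestrict K).codRestrict T hmem
  have hsurj : Function.Surjective f := by
    rintro ⟨t, ht⟩
    obtain ⟨x, hx⟩ := hp t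
    exact ⟨⟨x, by simpa [K, hx] using ht⟩, Subtype.ext hx⟩
  have hker : LinearMap.ker f = Submodule.comap K.subtype (LinearMap.ker p) := by
    ext x
    rw [LinearMap.mem_ker, Submodule.mem_comap, LinearMap.mem_ker]
    exact ⟨fun h => congrArg Subtype.val h, fun h => Subtype.ext h⟩
  exact ⟨(Submodule.quotEquivOfEq _ _ hker.symm).trans (f.quotKerEquivOfSurjective hsurj)⟩

/-- Construction 3.1: `Mod 0 = M`, `tsub n = t(Mod n)` (largest torsion submodule),
`F n = Mod n ⧸ tsub n`, `I n` an injective hull of `F n` via the embedding `e n`,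
and `Mod (n+1) = I n ⧸ F n` realized by the surjection `p n : I n → Mod (n+1)` with
`ker (p n) = range (e n)`.  With the differential `d n = e (n+1) ∘ mkQ ∘ p n` and the
augmentation `a = e 0 ∘ mkQ`, one has `d ∘ d = 0`, `d 0 ∘ a = 0`, and the cohomology of
the augmented complex `M → I⁰ → I¹ → ⋯` in degree `n` is isomorphic to `t(Mⁿ)`. -/
theorem stmt12 {R : Type u} [Ring R] (tc : HereditaryTorsionClass R)
    (Mod : ℕ → Type u) [∀ n, AddCommGroup (Mod n)] [∀ n, Module R (Mod n)]
    (tsub : ∀ n, Submodule R (Mod n))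
    (htor : ∀ n, tc.tor (ModuleCat.of R (tsub n)))
    (hlargest : ∀ n, ∀ N : Submodule R (Mod n), tc.tor (ModuleCat.of R N) → N ≤ tsub n)
    (I : ℕ → Type u) [∀ n, AddCommGroup (I n)] [∀ n, Module R (I n)]
    (hIinj : ∀ n, Module.Injective R (I n))
    (e : ∀ n, (Mod n ⧸ tsub n) →ₗ[R] I n) (he : ∀ n, Function.Injective (e n))
    (hess : ∀ n, ∀ N : Submodule R (I n), N ⊓ LinearMap.range (e n) = ⊥ → N = ⊥)
    (p : ∀ n, I n →ₗ[R] Mod (n + 1)) (hp : ∀ n, Function.Surjective (p n))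
    (hkerp : ∀ n, LinearMap.ker (p n) = LinearMap.range (e n))
    (d : ∀ n, I n →ₗ[R] I (n + 1))
    (hd : ∀ n, d n = (e (n + 1)) ∘ₗ ((tsub (n + 1)).mkQ ∘ₗ p n))
    (a : Mod 0 →ₗ[R] I 0) (ha : a = (e 0) ∘ₗ (tsub 0).mkQ) :
    (∀ n, (d (n + 1)) ∘ₗ (d n) = 0) ∧ ((d 0) ∘ₗ a = 0) ∧
    LinearMap.ker a = tsub 0 ∧
    Nonempty ((LinearMap.ker (d 0) ⧸
        Submodule.comap (LinearMap.ker (d 0)).subtype (LinearMap.range a))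
      ≃ₗ[R] tsub 1) ∧
    ∀ n, Nonempty ((LinearMap.ker (d (n + 1)) ⧸
        Submodule.comap (LinearMap.ker (d (n + 1))).subtype (LinearMap.range (d n)))
      ≃ₗ[R] tsub (n + 2)) := by
  have hker_d : ∀ n, LinearMap.ker (d n) = Submodule.comap (p n) (tsub (n + 1)) := by
    intro n
    ext x
    simp only [LinearMap.mem_ker, hd n, LinearMap.comp_apply, Submodule.mem_comap]
    rw [← map_zero (e (n + 1)), (he (n + 1)).eq_iff, Submodule.mkQ_apply,
      Submodule.Quotient.mk_eq_zero]
  have hrange_d : ∀ n, LinearMap.range (d n) = LinearMap.ker (p (n + 1)) := by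
    intro n
    rw [hkerp (n + 1), hd n, LinearMap.range_comp_of_range_eq_top]
    exact LinearMap.range_eq_top.2 (((tsub (n + 1)).mkQ_surjective).comp (hp n))
  have hrange_a : LinearMap.range a = LinearMap.ker (p 0) := by
    rw [hkerp 0, ha, LinearMap.range_comp_of_range_eq_top]
    exact LinearMap.range_eq_top.2 ((tsub 0).mkQ_surjective)
  refine ⟨?_, ?_, ?_, ?_, ?_⟩
  · intro n
    ext x
    have hx : p (n + 1) (d n x) = 0 := by
      rw [← LinearMap.mem_ker, ← hrange_d n]
      exact ⟨x, rfl⟩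
    simp [hd (n + 1), hx]
  · ext x
    have hx : p 0 (a x) = 0 := by
      rw [← LinearMap.mem_ker, ← hrange_a]
      exact ⟨x, rfl⟩
    simp [hd 0, hx]
  · ext x
    simp only [LinearMap.mem_ker, ha, LinearMap.comp_apply]
    rw [← map_zero (e 0), (he 0).eq_iff, Submodule.mkQ_apply,
      Submodule.Quotient.mk_eq_zero]
  · rw [hker_d 0, hrange_a]
    exact coh_aux (p 0) (hp 0) (tsub 1)
  · intro n
    rw [hker_d (n + 1), hrange_d n]
    exact coh_aux (p (n + 1)) (hp (n + 1)) (tsub (n + 2))
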